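/- Define u : ℂ → ℝ ∪ {−∞} by u(z) = Σ_{k=1}^∞ (1/k²)·log(|z − 1/k| + e^{−k³}). Then: (i) for every z ∈ ℂ the series is (absolutely) summable, so u(z) is a finite real number; in particular u(0) > −∞; and (ii) for every x ∈ ℂ with x ≠ 0 there exist a neighborhood U of x and real constants m ≤ M such that m ≤ u(z) ≤ M for all z ∈ U, i.e. u is bounded on a neighborhood of every nonzero point. -/

import Mathlib

/-- The `k`-th term of Demailly's example: `(1/k²)·log(|z − 1/k| + e^{−k³})`. -/
noncomputable def demaillyTerm (k : ℕ) (z : ℂ) : ℝ :=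
  (1 / (k : ℝ) ^ 2) * Real.log (‖z - 1 / (k : ℂ)‖ + Real.exp (-(k : ℝ) ^ 3))

/-- Demailly's example `u(z) = ∑_{k=1}^∞ (1/k²)·log(|z − 1/k| + e^{−k³})`. -/
noncomputable def demaillyU (z : ℂ) : ℝ := ∑' k : ℕ, demaillyTerm (k + 1) z

private lemma demailly_arg_pos (k : ℕ) (z : ℂ) :
    0 < ‖z - 1 / (k : ℂ)‖ + Real.exp (-(k : ℝ) ^ 3) := by
  positivity

private lemma demailly_abs_inv (k : ℕ) : ‖1 / ((k+1 : ℕ) : ℂ)‖ = 1 / ((k : ℝ) + 1) := by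
  rw [norm_div, norm_one, Complex.norm_natCast]
  push_cast; ring

/-- Upper bound for the argument of the logarithm. -/
private lemma demailly_arg_le (k : ℕ) (z : ℂ) :
    ‖z - 1 / ((k+1 : ℕ) : ℂ)‖ + Real.exp (-((k+1 : ℕ) : ℝ) ^ 3)
      ≤ ‖z‖ + 2 := by
  have h1 : ‖z - 1 / ((k+1 : ℕ) : ℂ)‖ ≤ ‖z‖ + 1 := by
    calc ‖z - 1 / ((k+1 : ℕ) : ℂ)‖
        ≤ ‖z‖ + ‖1 / ((k+1 : ℕ) : ℂ)‖ := by
          simpa using norm_sub_le z (1 / ((k+1 : ℕ) : ℂ))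
      _ ≤ ‖z‖ + 1 := by
          rw [demailly_abs_inv]
          have : (1 : ℝ) / ((k : ℝ) + 1) ≤ 1 := by
            rw [div_le_one (by positivity)]; linarith [Nat.cast_nonneg (α := ℝ) k]
          linarith
  have h2 : Real.exp (-((k+1 : ℕ) : ℝ) ^ 3) ≤ 1 := by
    rw [Real.exp_le_one_iff]
    have : (0:ℝ) ≤ ((k+1 : ℕ) : ℝ) ^ 3 := by positivity
    linarith
  linarith

/-- Generic upper bound on a term. -/
private lemma demailly_term_le (k : ℕ) (z : ℂ) {b : ℝ}
    (hb : ‖z‖ + 2 ≤ b) :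
    demaillyTerm (k+1) z ≤ (1 / ((k+1 : ℕ) : ℝ) ^ 2) * Real.log b := by
  unfold demaillyTerm
  refine mul_le_mul_of_nonneg_left ?_ (by positivity)
  exact Real.log_le_log (demailly_arg_pos _ z) ((demailly_arg_le k z).trans hb)

/-- Generic lower bound on a term, given a positive lower bound for `|z - 1/k|`. -/
private lemma demailly_term_ge (k : ℕ) (z : ℂ) {d : ℝ} (hd : 0 < d)
    (h : d ≤ ‖z - 1 / ((k+1 : ℕ) : ℂ)‖) :
    (1 / ((k+1 : ℕ) : ℝ) ^ 2) * Real.log d ≤ demaillyTerm (k+1) z := by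
  unfold demaillyTerm
  refine mul_le_mul_of_nonneg_left ?_ (by positivity)
  refine Real.log_le_log hd (h.trans ?_)
  have := Real.exp_pos (-((k+1 : ℕ) : ℝ) ^ 3)
  linarith

/-- Crude lower bound on a term. -/
private lemma demailly_term_ge_neg (k : ℕ) (z : ℂ) :
    -(((k+1 : ℕ)) : ℝ) ≤ demaillyTerm (k+1) z := by
  unfold demaillyTerm
  have hn : (0:ℝ) < ((k+1 : ℕ) : ℝ) := by positivity
  have h1 : Real.log (Real.exp (-((k+1 : ℕ) : ℝ) ^ 3))
      ≤ Real.log (‖z - 1 / ((k+1 : ℕ) : ℂ)‖ + Real.exp (-((k+1 : ℕ) : ℝ) ^ 3)) := by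
    refine Real.log_le_log (Real.exp_pos _) ?_
    have := norm_nonneg (z - 1 / ((k+1 : ℕ) : ℂ))
    linarith
  rw [Real.log_exp] at h1
  have h2 : (1 / ((k+1 : ℕ) : ℝ) ^ 2) * (-((k+1 : ℕ) : ℝ) ^ 3) = -((k+1 : ℕ) : ℝ) := by
    field_simp
  calc -(((k+1 : ℕ)) : ℝ) = (1 / ((k+1 : ℕ) : ℝ) ^ 2) * (-((k+1 : ℕ) : ℝ) ^ 3) := h2.symm
    _ ≤ _ := mul_le_mul_of_nonneg_left h1 (by positivity)

private lemma demailly_summable_sq : Summable (fun k : ℕ => 1 / ((k : ℝ) + 1) ^ 2) := by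
  have h := (summable_nat_add_iff (f := fun n : ℕ => 1 / (n : ℝ) ^ 2) 1).mpr
    (Real.summable_one_div_nat_pow.mpr one_lt_two)
  exact h.congr fun n => by push_cast; ring_nf

private lemma demailly_summable_rpow :
    Summable (fun k : ℕ => 2 / ((k : ℝ) + 1) ^ ((3:ℝ)/2)) := by
  have h := (summable_nat_add_iff (f := fun n : ℕ => 1 / (n : ℝ) ^ ((3:ℝ)/2)) 1).mpr
    (Real.summable_one_div_nat_rpow.mpr (by norm_num))
  have h2 := h.mul_left 2
  exact h2.congr fun n => by push_cast; ring_nf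

/-- `2√(n+1)/(n+1)² ≤ 2/(n+1)^{3/2}`. -/
private lemma demailly_sqrt_div (k : ℕ) :
    2 * Real.sqrt ((k : ℝ) + 1) / ((k : ℝ) + 1) ^ 2 ≤ 2 / ((k : ℝ) + 1) ^ ((3:ℝ)/2) := by
  have hn : (0:ℝ) < (k : ℝ) + 1 := by positivity
  have key : Real.sqrt ((k : ℝ) + 1) * ((k : ℝ) + 1) ^ ((3:ℝ)/2) = ((k : ℝ) + 1) ^ 2 := by
    rw [Real.sqrt_eq_rpow, ← Real.rpow_add hn]
    norm_num
  rw [div_le_div_iff₀ (by positivity) (by positivity), mul_assoc, key]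

/-- Part (i): summability. -/
private lemma demailly_summable (z : ℂ) : Summable fun k : ℕ => demaillyTerm (k + 1) z := by
  rcases eq_or_ne z 0 with rfl | hz
  · -- z = 0
    apply Summable.of_norm_bounded_eventually_nat
      (g := fun k => Real.log 2 / ((k : ℝ) + 1) ^ 2 + 2 / ((k : ℝ) + 1) ^ ((3:ℝ)/2))
      (demailly_summable_sq.mul_left (Real.log 2) |>.congr (fun n => by ring) |>.add
        demailly_summable_rpow)
    filter_upwards with k
    have hn : (0:ℝ) < (k : ℝ) + 1 := by positivity
    have hcast : ((k+1 : ℕ) : ℝ) = (k : ℝ) + 1 := by push_cast; ring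
    have habs : ‖(0:ℂ) - 1 / ((k+1 : ℕ) : ℂ)‖ = 1 / ((k : ℝ) + 1) := by
      rw [zero_sub, norm_neg, demailly_abs_inv]
    -- upper bound on the term
    have hup : demaillyTerm (k+1) 0 ≤ (1 / ((k : ℝ) + 1) ^ 2) * Real.log 2 := by
      have := demailly_term_le k 0 (b := 2) (by simp)
      rwa [hcast] at this
    -- lower bound on the term
    have hlow : (1 / ((k : ℝ) + 1) ^ 2) * Real.log (1 / ((k : ℝ) + 1)) ≤ demaillyTerm (k+1) 0 := by
      have := demailly_term_ge k 0 (d := 1 / ((k : ℝ) + 1)) (by positivity) (le_of_eq habs.symm)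
      rwa [hcast] at this
    have hlog : Real.log ((k : ℝ) + 1) ≤ 2 * Real.sqrt ((k : ℝ) + 1) := by
      have := Real.log_le_rpow_div (le_of_lt hn) (ε := 1/2) (by norm_num)
      rw [Real.sqrt_eq_rpow]
      calc Real.log ((k : ℝ) + 1) ≤ ((k : ℝ) + 1) ^ ((1:ℝ)/2) / (1/2) := this
        _ = 2 * ((k : ℝ) + 1) ^ ((1:ℝ)/2) := by ring
    have hloglow : -(2 * Real.sqrt ((k : ℝ) + 1)) / ((k : ℝ) + 1) ^ 2 ≤ demaillyTerm (k+1) 0 := by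
      refine le_trans ?_ hlow
      rw [Real.log_div one_ne_zero (ne_of_gt hn), Real.log_one, zero_sub]
      rw [div_eq_mul_one_div, mul_comm]
      refine mul_le_mul_of_nonneg_left ?_ (by positivity)
      linarith
    rw [Real.norm_eq_abs, abs_le]
    constructor
    · refine le_trans ?_ hloglow
      rw [neg_div]
      refine neg_le_neg ?_
      calc 2 * Real.sqrt ((k : ℝ) + 1) / ((k : ℝ) + 1) ^ 2
          ≤ 2 / ((k : ℝ) + 1) ^ ((3:ℝ)/2) := demailly_sqrt_div k
        _ ≤ Real.log 2 / ((k : ℝ) + 1) ^ 2 + 2 / ((k : ℝ) + 1) ^ ((3:ℝ)/2) := by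
            have : (0:ℝ) ≤ Real.log 2 / ((k : ℝ) + 1) ^ 2 := by
              have := Real.log_nonneg (by norm_num : (1:ℝ) ≤ 2); positivity
            linarith
    · refine hup.trans ?_
      have : (1 / ((k : ℝ) + 1) ^ 2) * Real.log 2 = Real.log 2 / ((k : ℝ) + 1) ^ 2 := by ring
      rw [this]
      have : (0:ℝ) ≤ 2 / ((k : ℝ) + 1) ^ ((3:ℝ)/2) := by positivity
      linarith
  · -- z ≠ 0
    set a := ‖z‖ with ha_def
    have ha : 0 < a := by simpa [ha_def] using (norm_pos_iff.mpr hz)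
    set c := |Real.log (a + 2)| + |Real.log (a / 2)| with hc_def
    apply Summable.of_norm_bounded_eventually_nat (g := fun k => c / ((k : ℝ) + 1) ^ 2)
      (demailly_summable_sq.mul_left c |>.congr (fun n => by ring))
    rw [Filter.eventually_atTop]
    refine ⟨⌈2 / a⌉₊, fun k hk => ?_⟩
    have hn : (0:ℝ) < (k : ℝ) + 1 := by positivity
    have hcast : ((k+1 : ℕ) : ℝ) = (k : ℝ) + 1 := by push_cast; ring
    have hK : 2 / a ≤ (k : ℝ) + 1 := by
      calc 2 / a ≤ (⌈2 / a⌉₊ : ℝ) := Nat.le_ceil _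
        _ ≤ (k : ℝ) := by exact_mod_cast hk
        _ ≤ (k : ℝ) + 1 := by linarith
    have hinv : 1 / ((k : ℝ) + 1) ≤ a / 2 := by
      rw [div_le_div_iff₀ hn (by norm_num)]
      have h2a : (2 / a) * a ≤ ((k : ℝ) + 1) * a :=
        mul_le_mul_of_nonneg_right hK (le_of_lt ha)
      rw [div_mul_cancel₀ _ ha.ne'] at h2a
      linarith
    have hsub : a / 2 ≤ ‖z - 1 / ((k+1 : ℕ) : ℂ)‖ := by
      have h1 : ‖z‖ - ‖1 / ((k+1 : ℕ) : ℂ)‖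
          ≤ ‖z - 1 / ((k+1 : ℕ) : ℂ)‖ := by
        simpa using norm_sub_norm_le z (1 / ((k+1 : ℕ) : ℂ))
      rw [demailly_abs_inv] at h1
      have : a / 2 ≤ a - 1 / ((k : ℝ) + 1) := by linarith
      exact this.trans h1
    have hup : demaillyTerm (k+1) z ≤ (1 / ((k : ℝ) + 1) ^ 2) * Real.log (a + 2) := by
      have := demailly_term_le k z (b := a + 2) le_rfl
      rwa [hcast] at this
    have hlow : (1 / ((k : ℝ) + 1) ^ 2) * Real.log (a / 2) ≤ demaillyTerm (k+1) z := by
      have := demailly_term_ge k z (d := a / 2) (by positivity) hsub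
      rwa [hcast] at this
    rw [Real.norm_eq_abs, abs_le]
    have hc1 : Real.log (a + 2) ≤ c := by
      rw [hc_def]
      have := abs_nonneg (Real.log (a / 2))
      have := le_abs_self (Real.log (a + 2))
      linarith
    have hc2 : -c ≤ Real.log (a / 2) := by
      rw [hc_def]
      have := abs_nonneg (Real.log (a + 2))
      have := neg_abs_le (Real.log (a / 2))
      linarith
    constructor
    · have h1 : (1 / ((k : ℝ) + 1) ^ 2) * (-c) ≤ (1 / ((k : ℝ) + 1) ^ 2) * Real.log (a / 2) :=
        mul_le_mul_of_nonneg_left hc2 (by positivity)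
      have h2 : -(c / ((k : ℝ) + 1) ^ 2) = (1 / ((k : ℝ) + 1) ^ 2) * (-c) := by ring
      linarith
    · refine hup.trans ?_
      calc (1 / ((k : ℝ) + 1) ^ 2) * Real.log (a + 2)
          ≤ (1 / ((k : ℝ) + 1) ^ 2) * c := mul_le_mul_of_nonneg_left hc1 (by positivity)
        _ = c / ((k : ℝ) + 1) ^ 2 := by ring

theorem chern_stmt8 :
    (∀ z : ℂ, Summable fun k : ℕ => demaillyTerm (k + 1) z) ∧
    (∀ x : ℂ, x ≠ 0 → ∃ U ∈ nhds x, ∃ m M : ℝ, m ≤ M ∧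
      ∀ z ∈ U, m ≤ demaillyU z ∧ demaillyU z ≤ M) := by
  constructor
  · exact demailly_summable
  · intro x hx
    set a := ‖x‖ with ha_def
    have ha : 0 < a := by simpa [ha_def] using (norm_pos_iff.mpr hx)
    set K := ⌈4 / a⌉₊ with hK_def
    -- lower minorant
    set h : ℕ → ℝ := fun k => if k + 1 < K then -(K : ℝ)
      else (1 / ((k : ℝ) + 1) ^ 2) * Real.log (a / 2) with hh_def
    have hsumh : Summable h := by
      apply Summable.of_norm_bounded_eventually_nat
        (g := fun k => |Real.log (a / 2)| / ((k : ℝ) + 1) ^ 2)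
        (demailly_summable_sq.mul_left _ |>.congr (fun n => by ring))
      rw [Filter.eventually_atTop]
      refine ⟨K, fun k hk => ?_⟩
      have : ¬ (k + 1 < K) := by omega
      rw [hh_def]
      simp only [this, if_false]
      rw [Real.norm_eq_abs, abs_mul, abs_of_nonneg (by positivity : (0:ℝ) ≤ 1 / ((k : ℝ) + 1) ^ 2)]
      exact le_of_eq (by ring)
    have key : ∀ z ∈ Metric.ball x (a / 4),
        (∑' k, h k) ≤ demaillyU z ∧
        demaillyU z ≤ Real.log (2 * a + 2) * ∑' k : ℕ, 1 / ((k : ℝ) + 1) ^ 2 := by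
      intro z hz
      rw [Metric.mem_ball, Complex.dist_eq] at hz
      have habsz_lo : 3 * a / 4 ≤ ‖z‖ := by
        have h1 : ‖x‖ ≤ ‖x - z‖ + ‖z‖ := by
          have := norm_add_le (x - z) z
          rwa [sub_add_cancel] at this
        have h2 : ‖x - z‖ < a / 4 := by
          rwa [show x - z = -(z - x) by ring, norm_neg]
        rw [← ha_def] at h1
        linarith
      have habsz_hi : ‖z‖ ≤ 2 * a := by
        have h1 : ‖z‖ ≤ ‖z - x‖ + ‖x‖ := by
          have := norm_add_le (z - x) x
          rwa [sub_add_cancel] at this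
        rw [← ha_def] at h1
        linarith
      constructor
      · -- lower bound
        rw [demaillyU]
        refine Summable.tsum_le_tsum ?_ hsumh (demailly_summable z)
        intro k
        rw [hh_def]
        by_cases hk : k + 1 < K
        · simp only [hk, if_true]
          refine le_trans ?_ (demailly_term_ge_neg k z)
          have : ((k+1 : ℕ) : ℝ) ≤ (K : ℝ) := by exact_mod_cast le_of_lt hk
          linarith
        · simp only [hk, if_false]
          have hkK : K ≤ k + 1 := by omega
          have hn : (0:ℝ) < (k : ℝ) + 1 := by positivity
          have hK4 : 4 / a ≤ (k : ℝ) + 1 := by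
            calc 4 / a ≤ (K : ℝ) := Nat.le_ceil _
              _ ≤ ((k + 1 : ℕ) : ℝ) := by exact_mod_cast hkK
              _ = (k : ℝ) + 1 := by push_cast; ring
          have hinv : 1 / ((k : ℝ) + 1) ≤ a / 4 := by
            rw [div_le_div_iff₀ hn (by norm_num)]
            have h4a : (4 / a) * a ≤ ((k : ℝ) + 1) * a :=
              mul_le_mul_of_nonneg_right hK4 (le_of_lt ha)
            rw [div_mul_cancel₀ _ ha.ne'] at h4a
            linarith
          have hsub : a / 2 ≤ ‖z - 1 / ((k+1 : ℕ) : ℂ)‖ := by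
            have h1 : ‖z‖ - ‖1 / ((k+1 : ℕ) : ℂ)‖
                ≤ ‖z - 1 / ((k+1 : ℕ) : ℂ)‖ := by
              simpa using norm_sub_norm_le z (1 / ((k+1 : ℕ) : ℂ))
            rw [demailly_abs_inv] at h1
            have : a / 2 ≤ ‖z‖ - 1 / ((k : ℝ) + 1) := by linarith
            exact this.trans h1
          have := demailly_term_ge k z (d := a / 2) (by positivity) hsub
          rwa [show ((k+1 : ℕ) : ℝ) = (k : ℝ) + 1 by push_cast; ring] at this
      · -- upper bound
        rw [demaillyU, show Real.log (2 * a + 2) * ∑' k : ℕ, 1 / ((k : ℝ) + 1) ^ 2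
            = ∑' k : ℕ, Real.log (2 * a + 2) * (1 / ((k : ℝ) + 1) ^ 2) from
          (demailly_summable_sq.tsum_mul_left _).symm]
        refine Summable.tsum_le_tsum ?_ (demailly_summable z)
          (demailly_summable_sq.mul_left _ |>.congr (fun n => rfl))
        intro k
        have := demailly_term_le k z (b := 2 * a + 2) (by linarith)
        rw [show ((k+1 : ℕ) : ℝ) = (k : ℝ) + 1 by push_cast; ring] at this
        refine this.trans (le_of_eq ?_)
        ring
    refine ⟨Metric.ball x (a / 4), Metric.ball_mem_nhds x (by positivity),
      ∑' k, h k, Real.log (2 * a + 2) * ∑' k : ℕ, 1 / ((k : ℝ) + 1) ^ 2, ?_, key⟩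
    have hx' := key x (Metric.mem_ball_self (by positivity))
    exact hx'.1.trans hx'.2
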